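/- If a metric space (X,d) admits a topological well-ordering, then no subspace of X is perfect. -/

import Mathlib

/-- If a metric space admits a topological well-ordering, then no subspace of it is
perfect: every nonempty subset has a point isolated in its subspace topology. -/
theorem stmt_4 {X : Type*} [MetricSpace X]
    (r : X → X → Prop) (hwo : IsWellOrder X r)
    (hopen : ∀ x : X, IsOpen {y : X | r y x}) :
    ∀ Y : Set X, Y.Nonempty → ∃ y ∈ Y, ∃ U : Set X, IsOpen U ∧ U ∩ Y = {y} := by
  intro Y hY
  have wf : WellFounded r := hwo.toIsWellFounded.wf
  set y := wf.min Y hY with hy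
  have hyY : y ∈ Y := wf.min_mem Y hY
  refine ⟨y, hyY, ?_⟩
  by_cases hsing : Y \ {y} = ∅
  · refine ⟨Set.univ, isOpen_univ, ?_⟩
    rw [Set.univ_inter]
    ext z
    simp only [Set.mem_singleton_iff]
    constructor
    · intro hz
      by_contra hzne
      exact Set.eq_empty_iff_forall_notMem.mp hsing z ⟨hz, hzne⟩
    · rintro rfl; exact hyY
  · have hne : (Y \ {y}).Nonempty := Set.nonempty_iff_ne_empty.mpr hsing
    set y' := wf.min _ hne with hy'
    have hy'mem : y' ∈ Y \ {y} := wf.min_mem _ hne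
    have hryy' : r y y' := by
      by_contra h1
      by_cases h3 : r y' y
      · exact absurd h3 (wf.not_lt_min Y hy'mem.1)
      · exact hy'mem.2 (hwo.trichotomous y y' h1 h3).symm
    refine ⟨{z : X | r z y'}, hopen y', ?_⟩
    ext z
    simp only [Set.mem_inter_iff, Set.mem_setOf_eq, Set.mem_singleton_iff]
    constructor
    · rintro ⟨hrz, hzY⟩
      by_contra hzne
      exact (wf.not_lt_min (Y \ {y}) ⟨hzY, hzne⟩) hrz
    · rintro rfl; exact ⟨hryy', hyY⟩
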